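/- Let H be a complex Hilbert space, and let p₁, p₂ be orthogonal projections on H whose ranges are ε-orthogonal for some 0 ≤ ε < 1/2. Then for every ξ ∈ H, ‖p₁ξ‖² + ‖p₂ξ‖² ≤ (1+δ(ε))² ‖Pξ‖², where P is the orthogonal projection onto the closed linear span of the ranges of p₁ and p₂, and δ: [0,1/2) → ℝ≥0 is some continuous function with δ(0) = 0 (it suffices to exhibit one such function). -/
import Mathlib

set_option maxHeartbeats 1000000


open scoped InnerProductSpace

/-- There exists a continuous function `δ : [0,1/2) → ℝ≥0` with `δ 0 = 0` such that
for any two orthogonal projections `p₁, p₂` on a complex Hilbert space whose ranges are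
`ε`-orthogonal (`0 ≤ ε < 1/2`), we have
`‖p₁ ξ‖² + ‖p₂ ξ‖² ≤ (1 + δ ε)² ‖P ξ‖²`,
where `P` is the orthogonal projection onto the closed linear span of the two ranges. -/
theorem two_projections_epsilon_orthogonal :
    ∃ δ : ℝ → ℝ,
      ContinuousOn δ (Set.Ico 0 (1 / 2)) ∧ δ 0 = 0 ∧
      (∀ t ∈ Set.Ico (0 : ℝ) (1 / 2), 0 ≤ δ t) ∧
      ∀ (H : Type) [NormedAddCommGroup H] [InnerProductSpace ℂ H] [CompleteSpace H]
        (ε : ℝ), 0 ≤ ε → ε < 1 / 2 →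
        ∀ p₁ p₂ P : H →L[ℂ] H,
          IsSelfAdjoint p₁ → p₁ * p₁ = p₁ →
          IsSelfAdjoint p₂ → p₂ * p₂ = p₂ →
          IsSelfAdjoint P → P * P = P →
          (∀ ξ η : H, ‖⟪p₁ ξ, p₂ η⟫_ℂ‖ ≤ ε * ‖p₁ ξ‖ * ‖p₂ η‖) →
          (Set.range fun x : H => P x) =
            closure ↑(Submodule.span ℂ ((Set.range fun x : H => p₁ x) ∪
              (Set.range fun x : H => p₂ x))) →
          ∀ ξ : H, ‖p₁ ξ‖ ^ 2 + ‖p₂ ξ‖ ^ 2 ≤ (1 + δ ε) ^ 2 * ‖P ξ‖ ^ 2 := by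
  refine ⟨fun t => t, continuousOn_id, rfl, fun t ht => ht.1, ?_⟩
  intro H _ _ _ ε hε0 hε p₁ p₂ P hp₁ hp₁2 hp₂ hp₂2 hP hP2 horth hrange ξ
  -- P is the identity on the closure of the span
  have hPid : ∀ y ∈ closure (↑(Submodule.span ℂ ((Set.range fun x : H => p₁ x) ∪
      (Set.range fun x : H => p₂ x))) : Set H), P y = y := by
    intro y hy
    rw [← hrange] at hy
    obtain ⟨x, hx⟩ := hy
    have h2 := ContinuousLinearMap.ext_iff.mp hP2 x
    simp only [ContinuousLinearMap.mul_apply] at h2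
    rw [← hx]; exact h2
  have hPp₁ : ∀ x, P (p₁ x) = p₁ x := fun x =>
    hPid _ (subset_closure (Submodule.subset_span (Set.mem_union_left _ ⟨x, rfl⟩)))
  have hPp₂ : ∀ x, P (p₂ x) = p₂ x := fun x =>
    hPid _ (subset_closure (Submodule.subset_span (Set.mem_union_right _ ⟨x, rfl⟩)))
  have comm : ∀ (q : H →L[ℂ] H), IsSelfAdjoint q → (∀ x, P (q x) = q x) →
      ∀ x, q (P x) = q x := by
    intro q hq hPq x
    have h : P * q = q := ContinuousLinearMap.ext fun x => hPq x
    have h2 : q * P = q := by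
      have := congrArg star h
      rwa [star_mul, hq.star_eq, hP.star_eq] at this
    exact ContinuousLinearMap.ext_iff.mp h2 x
  have hp₁P := comm p₁ hp₁ hPp₁ ξ
  have hp₂P := comm p₂ hp₂ hPp₂ ξ
  set η := P ξ with hη
  set a := p₁ ξ with haa
  set b := p₂ ξ with hbb
  -- ‖a‖² = re ⟪η, a⟫, similarly for b
  have hselfadj : ∀ (q : H →L[ℂ] H), IsSelfAdjoint q → ∀ x y : H,
      ⟪q x, y⟫_ℂ = ⟪x, q y⟫_ℂ := by
    intro q hq x y
    rw [← ContinuousLinearMap.adjoint_inner_left, ← ContinuousLinearMap.star_eq_adjoint,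
      hq.star_eq]
  have hqa : p₁ a = a := by
    simpa [ContinuousLinearMap.mul_apply] using ContinuousLinearMap.ext_iff.mp hp₁2 ξ
  have hqb : p₂ b = b := by
    simpa [ContinuousLinearMap.mul_apply] using ContinuousLinearMap.ext_iff.mp hp₂2 ξ
  have ha : ‖a‖ ^ 2 = (⟪η, a⟫_ℂ).re := by
    have : ⟪η, a⟫_ℂ = ⟪a, a⟫_ℂ := by
      conv_lhs => rw [← hqa, ← hselfadj p₁ hp₁, hp₁P]
    rw [this]
    simpa using (inner_self_eq_norm_sq (𝕜 := ℂ) a).symm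
  have hb : ‖b‖ ^ 2 = (⟪η, b⟫_ℂ).re := by
    have : ⟪η, b⟫_ℂ = ⟪b, b⟫_ℂ := by
      conv_lhs => rw [← hqb, ← hselfadj p₂ hp₂, hp₂P]
    rw [this]
    simpa using (inner_self_eq_norm_sq (𝕜 := ℂ) b).symm
  set S : ℝ := ‖a‖ ^ 2 + ‖b‖ ^ 2 with hS
  have hS1 : S ≤ ‖η‖ * ‖a + b‖ := by
    have : S = (⟪η, a + b⟫_ℂ).re := by
      rw [hS, ha, hb, inner_add_right, Complex.add_re]
    rw [this]
    calc (⟪η, a + b⟫_ℂ).re ≤ ‖⟪η, a + b⟫_ℂ‖ := Complex.re_le_norm _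
      _ ≤ ‖η‖ * ‖a + b‖ := norm_inner_le_norm _ _
  have hab : ‖⟪a, b⟫_ℂ‖ ≤ ε * ‖a‖ * ‖b‖ := horth ξ ξ
  have hS2 : ‖a + b‖ ^ 2 ≤ (1 + ε) * S := by
    have h1 : ‖a + b‖ ^ 2 = ‖a‖ ^ 2 + 2 * (⟪a, b⟫_ℂ).re + ‖b‖ ^ 2 := by
      simpa using norm_add_sq (𝕜 := ℂ) a b
    have h2 : (⟪a, b⟫_ℂ).re ≤ ε * ‖a‖ * ‖b‖ := (Complex.re_le_norm _).trans hab
    nlinarith [sq_nonneg (‖a‖ - ‖b‖), norm_nonneg a, norm_nonneg b, mul_nonneg hε0 (mul_nonneg (norm_nonneg a) (norm_nonneg b))]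
  have hSnn : 0 ≤ S := by positivity
  have hkey : S ≤ (1 + ε) * ‖η‖ ^ 2 := by
    rcases eq_or_lt_of_le hSnn with h0 | h0
    · nlinarith [sq_nonneg ‖η‖]
    · have hsq : S * S ≤ (1 + ε) * ‖η‖ ^ 2 * S := by
        nlinarith [norm_nonneg η, norm_nonneg (a + b), sq_nonneg (‖a + b‖)]
      exact le_of_mul_le_mul_right (by linarith [hsq]) h0
  have h1ε : (1 + ε) ≤ (1 + ε) ^ 2 := by nlinarith
  calc S ≤ (1 + ε) * ‖η‖ ^ 2 := hkey
    _ ≤ (1 + ε) ^ 2 * ‖η‖ ^ 2 := by nlinarith [sq_nonneg ‖η‖]
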